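/- Let n be an odd positive integer and let g ∈ (ZMod 2)[Y] be a monic divisor of Yⁿ - 1. Let C = { c : Fin n → ZMod 2 | the polynomial Σᵢ cᵢ·Yⁱ lies in the ideal of (ZMod 2)[Y] generated by g and Yⁿ - 1 } be the binary cyclic code of length n with generator polynomial g, and let C^⊥ = { y : Fin n → ZMod 2 | Σᵢ cᵢ·yᵢ = 0 for all c ∈ C } be its dual. Then C^⊥ ⊆ C if and only if g · ĝ divides Yⁿ - 1 in (ZMod 2)[Y], where ĝ(Y) = Y^{deg g}·g(1/Y) is the reciprocal polynomial of g. -/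

import Mathlib

open Polynomial

noncomputable section

/-- The binary cyclic code of length `n` with generator polynomial `g`: the coefficient
vectors `c` such that `Σᵢ cᵢ·Yⁱ` lies in the ideal generated by `g` and `Yⁿ - 1`. -/
def binCyclicCode (n : ℕ) (g : Polynomial (ZMod 2)) : Set (Fin n → ZMod 2) :=
  {c | (∑ i : Fin n, C (c i) * X ^ (i : ℕ)) ∈
    Ideal.span ({g, X ^ n - 1} : Set (Polynomial (ZMod 2)))}

/-- The dual of a code of length `n` over a commutative ring `A`, with respect to the
standard inner product `Σᵢ cᵢyᵢ`. -/
def dualCode {A : Type*} [CommRing A] (n : ℕ) (D : Set (Fin n → A)) : Set (Fin n → A) :=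
  {y | ∀ c ∈ D, ∑ i, c i * y i = 0}

namespace BinAux

/-- polynomial attached to a coefficient vector -/
def pv {n : ℕ} (c : Fin n → ZMod 2) : Polynomial (ZMod 2) :=
  ∑ i : Fin n, C (c i) * X ^ (i : ℕ)

lemma coeff_pv {n : ℕ} (c : Fin n → ZMod 2) (k : ℕ) :
    (pv c).coeff k = if h : k < n then c ⟨k, h⟩ else 0 := by
  simp only [pv, finset_sum_coeff, coeff_C_mul, coeff_X_pow, mul_ite, mul_one, mul_zero]
  split
  · rename_i h
    rw [Finset.sum_eq_single (⟨k, h⟩ : Fin n)]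
    · simp
    · intro b _ hb
      rw [if_neg]
      intro hkb
      exact hb (Fin.ext hkb.symm)
    · simp
  · rename_i h
    apply Finset.sum_eq_zero
    intro i _
    rw [if_neg]
    intro hk
    exact h (hk ▸ i.isLt)

lemma degree_pv_lt {n : ℕ} (c : Fin n → ZMod 2) : (pv c).degree < n := by
  rw [degree_lt_iff_coeff_zero]
  intro m hm
  rw [coeff_pv, dif_neg (by exact_mod_cast Nat.not_lt.2 hm)]

lemma natDegree_pv_lt {n : ℕ} (hn : 0 < n) (c : Fin n → ZMod 2) : (pv c).natDegree < n := by
  by_cases h : pv c = 0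
  · simpa [h] using hn
  · exact natDegree_lt_iff_degree_lt h |>.2 (degree_pv_lt c)

lemma pv_coeffvec {n : ℕ} (r : Polynomial (ZMod 2)) (hr : r.degree < (n : ℕ)) :
    pv (fun i : Fin n => r.coeff (i : ℕ)) = r := by
  ext m
  rw [coeff_pv]
  split
  · rfl
  · rename_i h
    exact (coeff_eq_zero_of_degree_lt (lt_of_lt_of_le hr (by exact_mod_cast Nat.not_lt.1 h))).symm

/-- the coefficient functional picking out the residue class `n-1 mod n` -/
def phi (n : ℕ) : Polynomial (ZMod 2) →+ ZMod 2 where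
  toFun q := q.sum fun k a => if k % n = n - 1 then a else 0
  map_zero' := Polynomial.sum_zero_index _
  map_add' p q := Polynomial.sum_add_index p q (fun k a => if k % n = n - 1 then a else 0)
    (fun i => ite_self 0) (fun a b₁ b₂ => by split <;> simp)

lemma phi_apply (n : ℕ) (q : Polynomial (ZMod 2)) :
    phi n q = q.sum fun k a => if k % n = n - 1 then a else 0 := rfl

lemma phi_monomial (n : ℕ) (m : ℕ) (a : ZMod 2) :
    phi n (monomial m a) = if m % n = n - 1 then a else 0 := by
  rw [phi_apply, Polynomial.sum_monomial_index]
  exact ite_self 0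

lemma phi_C_mul_X_pow (n : ℕ) (m : ℕ) (a : ZMod 2) :
    phi n (C a * X ^ m) = if m % n = n - 1 then a else 0 := by
  rw [C_mul_X_pow_eq_monomial, phi_monomial]

lemma phi_X_pow_n_mul (n : ℕ) (q : Polynomial (ZMod 2)) :
    phi n (X ^ n * q) = phi n q := by
  induction q using Polynomial.induction_on' with
  | add p q hp hq => rw [mul_add, map_add, map_add, hp, hq]
  | monomial m a =>
      rw [phi_monomial, ← C_mul_X_pow_eq_monomial, show X ^ n * (C a * X ^ m) =
        C a * X ^ (n + m) by ring, phi_C_mul_X_pow, Nat.add_mod_left]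

lemma phi_Xn_sub_one_mul (n : ℕ) (q : Polynomial (ZMod 2)) :
    phi n ((X ^ n - 1) * q) = 0 := by
  have h : (X ^ n - 1) * q + q = X ^ n * q := by ring
  have h2 := congrArg (phi n) h
  rw [map_add, phi_X_pow_n_mul] at h2
  exact add_right_cancel (h2.trans (zero_add (phi n q)).symm)

lemma mod_aux {n k : ℕ} (hn : 0 < n) (hk : k ≤ 2 * n - 2) (hmod : k % n = n - 1) :
    k = n - 1 := by
  have hdm := Nat.div_add_mod k n
  rcases Nat.eq_zero_or_pos (k / n) with h0 | h1
  · rw [h0, Nat.mul_zero, zero_add, hmod] at hdm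
    omega
  · have h2 : n ≤ n * (k / n) := Nat.le_mul_of_pos_right n h1
    have h3 : 2 * n - 1 ≤ k := by
      calc 2 * n - 1 = n + (n - 1) := by omega
        _ ≤ n * (k / n) + (n - 1) := Nat.add_le_add_right h2 _
        _ = n * (k / n) + k % n := by rw [hmod]
        _ = k := hdm
    omega

lemma phi_eq_coeff {n : ℕ} (hn : 0 < n) (q : Polynomial (ZMod 2))
    (hq : q.natDegree ≤ 2 * n - 2) : phi n q = q.coeff (n - 1) := by
  rw [phi_apply, Polynomial.sum_def]
  rw [Finset.sum_eq_single (n - 1)]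
  · rw [if_pos (Nat.mod_eq_of_lt (by omega))]
  · intro b hb hbne
    rw [if_neg]
    intro hbmod
    exact hbne (mod_aux hn (le_trans (le_natDegree_of_mem_supp b hb) hq) hbmod)
  · intro hns
    rw [Polynomial.notMem_support_iff.1 hns, if_pos (Nat.mod_eq_of_lt (by omega))]

lemma inner_eq {n : ℕ} (hn : 0 < n) (c y : Fin n → ZMod 2) :
    ∑ i, c i * y i = phi n (pv c * pv (y ∘ Fin.rev)) := by
  rw [pv, pv, Finset.sum_mul_sum]
  have hrw : phi n (∑ i : Fin n, ∑ j : Fin n,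
        C (c i) * X ^ (i : ℕ) * (C ((y ∘ Fin.rev) j) * X ^ (j : ℕ)))
      = ∑ i : Fin n, ∑ j : Fin n,
        (if ((i : ℕ) + (j : ℕ)) % n = n - 1 then c i * y (Fin.rev j) else 0) := by
    rw [map_sum]
    refine Finset.sum_congr rfl fun i _ => ?_
    rw [map_sum]
    refine Finset.sum_congr rfl fun j _ => ?_
    rw [show C (c i) * X ^ (i : ℕ) * (C ((y ∘ Fin.rev) j) * X ^ (j : ℕ))
        = C (c i * y (Fin.rev j)) * X ^ ((i : ℕ) + (j : ℕ)) by
      simp only [Function.comp_apply, C_mul]; ring]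
    rw [phi_C_mul_X_pow]
  rw [hrw]
  refine Finset.sum_congr rfl fun i _ => ?_
  rw [Finset.sum_eq_single (Fin.rev i)]
  · rw [if_pos, Fin.rev_rev]
    have hi := i.isLt
    rw [Fin.val_rev]
    rw [Nat.mod_eq_of_lt] <;> omega
  · intro j _ hj
    rw [if_neg]
    intro hmod
    have hi := i.isLt; have hjlt := j.isLt
    have hsum : (i : ℕ) + (j : ℕ) = n - 1 :=
      mod_aux hn (by omega) hmod
    exact hj (Fin.ext (by rw [Fin.val_rev]; omega))
  · simp

variable {n : ℕ} {g : Polynomial (ZMod 2)}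

lemma mem_code_iff (hgn : g ∣ (X ^ n - 1)) (c : Fin n → ZMod 2) :
    c ∈ binCyclicCode n g ↔ g ∣ pv c := by
  have hspan : Ideal.span ({g, X ^ n - 1} : Set (Polynomial (ZMod 2)))
      = Ideal.span {g} := by
    apply le_antisymm
    · rw [Ideal.span_le]
      rintro x hx
      simp only [Set.mem_insert_iff, Set.mem_singleton_iff] at hx
      rcases hx with rfl | rfl
      · exact Ideal.mem_span_singleton.2 dvd_rfl
      · exact Ideal.mem_span_singleton.2 hgn
    · exact Ideal.span_mono (Set.singleton_subset_iff.2 (Set.mem_insert _ _))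
  show _ ∈ Ideal.span _ ↔ _
  rw [hspan, Ideal.mem_span_singleton]
  rfl

lemma mem_dual_iff (hn : 0 < n) (hgn : g ∣ (X ^ n - 1)) (y : Fin n → ZMod 2) :
    y ∈ dualCode n (binCyclicCode n g) ↔ (X ^ n - 1) ∣ g * pv (y ∘ Fin.rev) := by
  have hC1 : (X ^ n - 1 : Polynomial (ZMod 2)) = X ^ n - C 1 := by rw [map_one]
  have hmon : (X ^ n - 1 : Polynomial (ZMod 2)).Monic := by
    rw [hC1]; exact monic_X_pow_sub_C 1 hn.ne'
  have hdegXn : (X ^ n - 1 : Polynomial (ZMod 2)).degree = n := by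
    rw [hC1, degree_X_pow_sub_C hn]
  set w := pv (y ∘ Fin.rev) with hw
  constructor
  · intro hy
    have key : ∀ k, k < n → phi n (X ^ k * (g * w)) = 0 := by
      intro k hk
      have hdiv := modByMonic_add_div (X ^ k * g) (X ^ n - 1)
      have hrdeg : (X ^ k * g %ₘ (X ^ n - 1)).degree < (n : ℕ) :=
        hdegXn ▸ degree_modByMonic_lt _ hmon
      have hrg : g ∣ (X ^ k * g %ₘ (X ^ n - 1)) := by
        have hre : X ^ k * g %ₘ (X ^ n - 1)
            = X ^ k * g - (X ^ n - 1) * (X ^ k * g /ₘ (X ^ n - 1)) := by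
          linear_combination hdiv
        rw [hre]
        exact dvd_sub (Dvd.intro_left _ rfl) (hgn.mul_right _)
      have hcmem : (fun i : Fin n => (X ^ k * g %ₘ (X ^ n - 1)).coeff (i : ℕ))
          ∈ binCyclicCode n g := by
        rw [mem_code_iff hgn, pv_coeffvec _ hrdeg]
        exact hrg
      have h0 := hy _ hcmem
      rw [inner_eq hn, pv_coeffvec _ hrdeg] at h0
      have heq : X ^ k * (g * w) = (X ^ k * g %ₘ (X ^ n - 1)) * w
          + (X ^ n - 1) * ((X ^ k * g /ₘ (X ^ n - 1)) * w) := by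
        linear_combination (-w) * hdiv
      rw [heq, map_add, phi_Xn_sub_one_mul, h0, add_zero]
    have hdiv' := modByMonic_add_div (g * w) (X ^ n - 1)
    have hr'deg : (g * w %ₘ (X ^ n - 1)).degree < (n : ℕ) :=
      hdegXn ▸ degree_modByMonic_lt _ hmon
    have hr'nat : (g * w %ₘ (X ^ n - 1)).natDegree ≤ n - 1 := by
      by_cases hz : g * w %ₘ (X ^ n - 1) = 0
      · simp [hz]
      · have := (natDegree_lt_iff_degree_lt hz).2 hr'deg
        omega
    have hphi : ∀ k, k < n → phi n (X ^ k * (g * w %ₘ (X ^ n - 1))) = 0 := by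
      intro k hk
      have heq : X ^ k * (g * w %ₘ (X ^ n - 1)) = X ^ k * (g * w)
          - (X ^ n - 1) * (X ^ k * (g * w /ₘ (X ^ n - 1))) := by
        linear_combination X ^ k * hdiv'
      rw [heq, map_sub, key k hk, phi_Xn_sub_one_mul, sub_zero]
    have hz : g * w %ₘ (X ^ n - 1) = 0 := by
      ext m
      rw [coeff_zero]
      by_cases hm : m < n
      · have hk := hphi (n - 1 - m) (by omega)
        rw [phi_eq_coeff hn _ (by
          refine le_trans natDegree_mul_le ?_
          rw [natDegree_X_pow]
          omega)] at hk
        obtain ⟨t, ht⟩ : ∃ t, t = n - 1 - m := ⟨_, rfl⟩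
        rw [← ht] at hk
        rw [show (n - 1 : ℕ) = m + t by omega, coeff_X_pow_mul] at hk
        exact hk
      · exact coeff_eq_zero_of_degree_lt
          (lt_of_lt_of_le hr'deg (by exact_mod_cast Nat.not_lt.1 hm))
    exact (modByMonic_eq_zero_iff_dvd hmon).1 hz
  · rintro ⟨u, hu⟩ c hc
    obtain ⟨t, ht⟩ := (mem_code_iff hgn c).1 hc
    rw [inner_eq hn, ht]
    rw [show g * t * w = (X ^ n - 1) * (u * t) by linear_combination t * hu]
    exact phi_Xn_sub_one_mul n _

lemma pv_rev (hn : 0 < n) (y : Fin n → ZMod 2) :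
    pv (y ∘ Fin.rev) = (pv y).reflect (n - 1) := by
  ext i
  rw [coeff_reflect, coeff_pv, coeff_pv]
  by_cases hi : i < n
  · rw [dif_pos hi, revAt_le (by omega : i ≤ n - 1)]
    rw [dif_pos (by omega : n - 1 - i < n)]
    simp only [Function.comp_apply]
    congr 1
    exact Fin.ext (by rw [Fin.val_rev]; show n - (i + 1) = n - 1 - i; omega)
  · rw [dif_neg hi, revAt_eq_self_of_lt (by omega : n - 1 < i), dif_neg hi]

lemma reflect_eq_X_pow_mul_reverse (f : Polynomial (ZMod 2)) {N : ℕ}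
    (hN : f.natDegree ≤ N) :
    f.reflect N = X ^ (N - f.natDegree) * f.reverse := by
  set d := f.natDegree with hd
  ext i
  rw [coeff_reflect, coeff_X_pow_mul', coeff_reverse]
  by_cases h1 : N - d ≤ i
  · rw [if_pos h1]
    by_cases h2 : i ≤ N
    · rw [revAt_le h2, revAt_le (by omega : i - (N - d) ≤ d)]
      congr 1
      omega
    · rw [revAt_eq_self_of_lt (by omega), revAt_eq_self_of_lt (by omega)]
      rw [coeff_eq_zero_of_natDegree_lt (by omega), coeff_eq_zero_of_natDegree_lt (by omega)]
  · rw [if_neg h1, revAt_le (by omega : i ≤ N)]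
    exact coeff_eq_zero_of_natDegree_lt (by omega)

end BinAux

open BinAux

/-- A binary cyclic code `C` of odd length `n` with generator polynomial `g` contains its
dual if and only if `Yⁿ - 1 ≡ 0 (mod g·ĝ)`, where `ĝ` is the reciprocal polynomial of `g`. -/
theorem dual_subset_iff_reciprocal_dvd (n : ℕ) (hodd : Odd n) (hpos : 0 < n)
    (g : Polynomial (ZMod 2)) (hg : g.Monic) (hgn : g ∣ (X ^ n - 1)) :
    dualCode n (binCyclicCode n g) ⊆ binCyclicCode n g ↔
      g * g.reverse ∣ (X ^ n - 1) := by
  classical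
  obtain ⟨h, hh⟩ := hgn
  have hgn : g ∣ (X ^ n - 1 : Polynomial (ZMod 2)) := ⟨h, hh⟩
  have hC1 : (X ^ n - 1 : Polynomial (ZMod 2)) = X ^ n - C 1 := by rw [map_one]
  have hXn0 : (X ^ n - 1 : Polynomial (ZMod 2)) ≠ 0 := by
    rw [hC1]
    exact X_pow_sub_C_ne_zero hpos 1
  have hg0 : g ≠ 0 := hg.ne_zero
  have hh0 : h ≠ 0 := by rintro rfl; rw [mul_zero] at hh; exact hXn0 hh
  have hrevg0 : g.reverse ≠ 0 := fun hc => hg0 (reverse_eq_zero.1 hc)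
  have hndeg : (X ^ n - 1 : Polynomial (ZMod 2)).natDegree = n := by
    rw [hC1, natDegree_X_pow_sub_C]
  have hdeg : g.natDegree + h.natDegree = n := by
    rw [← natDegree_mul hg0 hh0, ← hh, hndeg]
  -- reverse of X^n - 1 is itself (char 2)
  have hrevXn : (X ^ n - 1 : Polynomial (ZMod 2)).reverse = X ^ n - 1 := by
    have hneg : (-1 : Polynomial (ZMod 2)) = 1 := by
      have h2 : (-1 : ZMod 2) = 1 := by decide
      rw [← C_1, ← C_neg, h2]
    have hone : (X ^ n - 1 : Polynomial (ZMod 2)) = X ^ n + 1 := by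
      rw [sub_eq_add_neg, hneg]
    rw [Polynomial.reverse, hndeg, hone, reflect_add, reflect_one, reflect_monomial,
      revAt_le (le_refl n), Nat.sub_self, pow_zero]
    try rw [add_comm]
  have hrevmul : g.reverse * h.reverse = X ^ n - 1 := by
    rw [← reverse_mul_of_domain, ← hh, hrevXn]
  -- coprimality of X and g
  have hgcoeff : g.coeff 0 ≠ 0 := by
    intro hc
    have hx : (X : Polynomial (ZMod 2)) ∣ g := X_dvd_iff.2 hc
    have hx2 : (X : Polynomial (ZMod 2)) ∣ X ^ n - 1 := hx.trans hgn
    rw [X_dvd_iff] at hx2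
    rw [coeff_sub, coeff_X_pow, if_neg (by omega : ¬ (0 = n)), coeff_one, if_pos rfl] at hx2
    exact absurd hx2 (by decide)
  have hcop : IsCoprime (X : Polynomial (ZMod 2)) g :=
    (prime_X.coprime_iff_not_dvd).2 fun hd => hgcoeff (X_dvd_iff.1 hd)
  -- Step 1: reduce to a polynomial statement
  have main : (dualCode n (binCyclicCode n g) ⊆ binCyclicCode n g) ↔
      ∀ z : Fin n → ZMod 2, (X ^ n - 1) ∣ g * pv z → g ∣ pv (z ∘ Fin.rev) := by
    constructor
    · intro hsub z hz
      have hzmem : (z ∘ Fin.rev) ∈ dualCode n (binCyclicCode n g) := by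
        rw [mem_dual_iff hpos hgn]
        have hzz : (z ∘ Fin.rev) ∘ Fin.rev = z := by
          funext i; simp [Function.comp, Fin.rev_rev]
        rw [hzz]
        exact hz
      exact (mem_code_iff hgn _).1 (hsub hzmem)
    · intro hB y hy
      rw [mem_code_iff hgn]
      have hz := (mem_dual_iff hpos hgn y).1 hy
      have hyc := hB (y ∘ Fin.rev) hz
      have hyy : (y ∘ Fin.rev) ∘ Fin.rev = y := by
        funext i; simp [Function.comp, Fin.rev_rev]
      rwa [hyy] at hyc
  rw [main]
  -- Step 2: trivial case g = 1
  by_cases hg1 : g.natDegree = 0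
  · have hgone : g = 1 := hg.natDegree_eq_zero.1 hg1
    subst hgone
    constructor
    · intro _
      rw [one_mul]
      have hrev1 : (1 : Polynomial (ZMod 2)).reverse = 1 := by
        rw [Polynomial.reverse, natDegree_one, reflect_one, pow_zero]
      rw [hrev1]
      exact one_dvd _
    · intro _ z _
      exact one_dvd _
  · have hgdpos : 0 < g.natDegree := Nat.pos_of_ne_zero hg1
    have hhlt : h.natDegree < n := by omega
    have step : (∀ z : Fin n → ZMod 2, (X ^ n - 1) ∣ g * pv z → g ∣ pv (z ∘ Fin.rev)) ↔
        g ∣ h.reverse := by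
      constructor
      · intro hB
        have hhdeg : h.degree < (n : ℕ) := by
          rcases eq_or_ne h 0 with rfl | hne
          · rw [degree_zero]; exact WithBot.bot_lt_coe n
          · exact (natDegree_lt_iff_degree_lt hne).1 hhlt
        have hz := hB (fun i : Fin n => h.coeff (i : ℕ)) (by
          rw [pv_coeffvec h hhdeg, ← hh])
        rw [pv_rev hpos, pv_coeffvec h hhdeg,
          reflect_eq_X_pow_mul_reverse h (by omega : h.natDegree ≤ n - 1)] at hz
        exact ((hcop.pow_left).symm).dvd_of_dvd_mul_left hz
      · intro hdvd z hz
        by_cases hz0 : pv z = 0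
        · rw [pv_rev hpos, hz0, reflect_zero]
          exact dvd_zero g
        · have hddvd : h ∣ pv z := by
            rw [hh] at hz
            exact (mul_dvd_mul_iff_left hg0).1 hz
          obtain ⟨s, hs⟩ := hddvd
          rw [pv_rev hpos, reflect_eq_X_pow_mul_reverse _ (by
            have := natDegree_pv_lt hpos z; omega : (pv z).natDegree ≤ n - 1)]
          rw [hs, reverse_mul_of_domain]
          exact (hdvd.mul_right s.reverse).mul_left _
    rw [step]
    -- Step 3: g ∣ reverse h ↔ g * reverse g ∣ X^n - 1
    constructor
    · intro hd
      rw [← hrevmul]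
      calc g * g.reverse ∣ h.reverse * g.reverse := mul_dvd_mul_right hd g.reverse
        _ = g.reverse * h.reverse := mul_comm _ _
    · intro hd
      rw [← hrevmul] at hd
      have hd2 : g.reverse * g ∣ g.reverse * h.reverse := by
        rw [mul_comm g.reverse g]; exact hd
      exact (mul_dvd_mul_iff_left hrevg0).1 hd2
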